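/- Let S be a type of states with transition relations T_c, T_u : S → S → Prop, initial states I : Set S and safe states P : Set S. Define Bad = {s : S | ∃ t, t ∉ P ∧ ReflTransGen T_u s t}, and define the canonical supervisor T* by T* s t ↔ (T_u s t ∨ (T_c s t ∧ t ∉ Bad)). Let T^S : S → S → Prop be any safe supervisor, i.e. T_u s t → T^S s t, T^S s t → (T_c s t ∨ T_u s t), and every state reachable from I under T^S lies in P. Then every state reachable from I under T^S is also reachable from I under T*. -/

import Mathlib

theorem pdrc_canonical_supervisor_minimally_restrictive {S : Type*}
    (Tc Tu : S → S → Prop) (I P : Set S) (Bad : Set S)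
    (hBad : Bad = {s : S | ∃ t, t ∉ P ∧ Relation.ReflTransGen Tu s t})
    (Tstar : S → S → Prop)
    (hTstar : ∀ s t, Tstar s t ↔ (Tu s t ∨ (Tc s t ∧ t ∉ Bad)))
    (TS : S → S → Prop)
    (hTuTS : ∀ s t, Tu s t → TS s t)
    (hTSsub : ∀ s t, TS s t → (Tc s t ∨ Tu s t))
    (hsafe : ∀ t : S, (∃ s ∈ I, Relation.ReflTransGen TS s t) → t ∈ P) :
    ∀ t : S, (∃ s ∈ I, Relation.ReflTransGen TS s t) →
      (∃ s ∈ I, Relation.ReflTransGen Tstar s t) := by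
  have hnotbad : ∀ t : S, (∃ s ∈ I, Relation.ReflTransGen TS s t) → t ∉ Bad := by
    intro t ⟨s, hs, hst⟩ hb
    rw [hBad] at hb
    obtain ⟨u, hu, htu⟩ := hb
    exact hu (hsafe u ⟨s, hs, hst.trans (Relation.ReflTransGen.mono (fun a b h => hTuTS a b h) _ _ htu)⟩)
  rintro t ⟨s, hs, hst⟩
  refine ⟨s, hs, ?_⟩
  induction hst with
  | refl => exact Relation.ReflTransGen.refl
  | tail hab hbc ih =>
    rename_i b c
    refine ih.tail ((hTstar b c).mpr ?_)
    rcases hTSsub b c hbc with h | h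
    · exact Or.inr ⟨h, hnotbad c ⟨s, hs, hab.tail hbc⟩⟩
    · exact Or.inl h
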